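/- Let m ≥ 3 and let A ≥ 0, B be integers with 14A + 7B - B² ≥ 0 and such that 14A + 7B - B² ≠ 2·4^l(8k+7) for all nonnegative integers l, k. Then there exist integers x₁, x₂, x₃, x₄ with P_m(x₁) + 2P_m(x₂) + 2P_m(x₃) + 2P_m(x₄) = A(m-2) + B. -/

import Mathlib

/-- The generalized `m`-gonal number `P_m(x) = ((m-2)x² - (m-4)x)/2`. -/
def polygonal (m x : ℤ) : ℤ := ((m - 2) * x ^ 2 - (m - 4) * x) / 2

/-- ternary quadratic form value -/
def tQ (a b c d e f x y z : ℤ) : ℤ :=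
  a * x ^ 2 + b * y ^ 2 + c * z ^ 2 + 2 * (d * x * y + e * x * z + f * y * z)

/-- associated bilinear form -/
def tB (a b c d e f x y z x' y' z' : ℤ) : ℤ :=
  a * x * x' + b * y * y' + c * z * z' + d * (x * y' + x' * y) + e * (x * z' + x' * z)
    + f * (y * z' + y' * z)

/-- Positive definite integral binary quadratic form of determinant 1 is a sum of two
squares of linear forms. -/
lemma binSOS : ∀ (n : ℕ) (a b c : ℤ), a.natAbs ≤ n → 0 < a → a * c - b ^ 2 = 1 →
    ∃ α β γ δ : ℤ, ∀ Y Z : ℤ,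
      a * Y ^ 2 + 2 * b * Y * Z + c * Z ^ 2 = (α * Y + β * Z) ^ 2 + (γ * Y + δ * Z) ^ 2 := by
  intro n
  induction n using Nat.strong_induction_on with
  | _ n ih =>
    intro a b c han ha hdet
    rcases eq_or_lt_of_le (show (1:ℤ) ≤ a by omega) with h1 | h2
    · -- a = 1
      refine ⟨1, b, 0, 1, fun Y Z => ?_⟩
      have ha1 : a = 1 := h1.symm
      subst ha1
      linear_combination hdet * Z ^ 2
    · -- a ≥ 2
      set k : ℤ := (2 * b + a) / (2 * a) with hk
      have h2a : (0:ℤ) < 2 * a := by linarith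
      have hmod : 2 * a * k + (2 * b + a) % (2 * a) = 2 * b + a := by
        rw [hk]; exact Int.mul_ediv_add_emod (2 * b + a) (2 * a)
      have hm0 : 0 ≤ (2 * b + a) % (2 * a) := Int.emod_nonneg _ (by linarith)
      have hm1 : (2 * b + a) % (2 * a) < 2 * a := Int.emod_lt_of_pos _ h2a
      -- b1 = b - k*a satisfies -a ≤ 2*b1 < a
      have hb1l : -a ≤ 2 * (b - k * a) := by linarith [hmod, hm0]
      have hb1u : 2 * (b - k * a) < a := by linarith [hmod, hm1]
      have hb1sq : 4 * (b - k * a) ^ 2 ≤ a ^ 2 := by nlinarith [hb1l, hb1u]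
      set c1 : ℤ := a * k ^ 2 - 2 * b * k + c with hc1
      have hdet1 : c1 * a - (k * a - b) ^ 2 = 1 := by rw [hc1]; linear_combination hdet
      have hc1pos : 0 < c1 := by nlinarith [sq_nonneg (k * a - b)]
      have hc1lt : c1 < a := by nlinarith
      have hrec := ih c1.natAbs (by
          have : c1.natAbs < a.natAbs := by omega
          omega) c1 (k * a - b) a le_rfl hc1pos hdet1
      obtain ⟨α', β', γ', δ', hQ⟩ := hrec
      refine ⟨-β', α' - k * β', -δ', γ' - k * δ', fun Y Z => ?_⟩
      have h' := hQ Z (-Y - k * Z)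
      rw [hc1] at h'
      linear_combination h'

/-- A positive definite binary form attains, at a primitive vector, a positive value `A`
with `3A² ≤ 4·det`. -/
lemma binred : ∀ (n : ℕ) (a b c : ℤ), a.natAbs ≤ n → 0 < a → 0 < a * c - b ^ 2 →
    ∃ p q r s : ℤ, p * s - q * r = 1 ∧ 0 < a * p ^ 2 + 2 * b * p * r + c * r ^ 2 ∧
      3 * (a * p ^ 2 + 2 * b * p * r + c * r ^ 2) ^ 2 ≤ 4 * (a * c - b ^ 2) := by
  intro n
  induction n using Nat.strong_induction_on with
  | _ n ih =>
    intro a b c han ha hdet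
    set k : ℤ := (2 * b + a) / (2 * a) with hk
    have h2a : (0:ℤ) < 2 * a := by linarith
    have hmod : 2 * a * k + (2 * b + a) % (2 * a) = 2 * b + a := by
      rw [hk]; exact Int.mul_ediv_add_emod (2 * b + a) (2 * a)
    have hm0 : 0 ≤ (2 * b + a) % (2 * a) := Int.emod_nonneg _ (by linarith)
    have hm1 : (2 * b + a) % (2 * a) < 2 * a := Int.emod_lt_of_pos _ h2a
    have hb1l : -a ≤ 2 * (b - k * a) := by linarith [hmod, hm0]
    have hb1u : 2 * (b - k * a) < a := by linarith [hmod, hm1]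
    have hb1sq : 4 * (b - k * a) ^ 2 ≤ a ^ 2 := by nlinarith [hb1l, hb1u]
    set c1 : ℤ := a * k ^ 2 - 2 * b * k + c with hc1
    have hdet1 : c1 * a - (k * a - b) ^ 2 = a * c - b ^ 2 := by rw [hc1]; ring
    have hc1pos : 0 < c1 := by nlinarith [sq_nonneg (k * a - b)]
    rcases le_or_gt a c1 with hle | hlt
    · -- already reduced; value a at (1,0)
      refine ⟨1, -k, 0, 1, by ring, by nlinarith, ?_⟩
      have hval : a * 1 ^ 2 + 2 * b * 1 * 0 + c * 0 ^ 2 = a := by ring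
      rw [hval]
      nlinarith [hb1sq, hle, hc1pos]
    · -- recurse on (c1, k*a - b, a)
      have hrec := ih c1.natAbs (by
          have : c1.natAbs < a.natAbs := by omega
          omega) c1 (k * a - b) a le_rfl hc1pos (by rw [hdet1]; exact hdet)
      obtain ⟨p', q', r', s', h1, h2, h3⟩ := hrec
      refine ⟨-k * p' - r', -k * q' - s', p', q', by linear_combination h1, ?_, ?_⟩
      · have e1 : a * (-k * p' - r') ^ 2 + 2 * b * (-k * p' - r') * p' + c * p' ^ 2
            = c1 * p' ^ 2 + 2 * (k * a - b) * p' * r' + a * r' ^ 2 := by rw [hc1]; ring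
        rw [e1]; exact h2
      · have e1 : a * (-k * p' - r') ^ 2 + 2 * b * (-k * p' - r') * p' + c * p' ^ 2
            = c1 * p' ^ 2 + 2 * (k * a - b) * p' * r' + a * r' ^ 2 := by rw [hc1]; ring
        have e2 : a * c - b ^ 2 = c1 * a - (k * a - b) ^ 2 := by rw [hdet1]
        rw [e1, e2]; exact h3

set_option maxHeartbeats 1600000 in
/-- Every positive definite integral ternary quadratic form of determinant 1 is a sum
of three squares of integral linear forms. -/
theorem terSOS : ∀ (n : ℕ) (a b c d e f : ℤ), a.natAbs ≤ n →
    (∀ x y z : ℤ, ¬(x = 0 ∧ y = 0 ∧ z = 0) → 0 < tQ a b c d e f x y z) →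
    a * b * c + 2 * d * e * f - a * f ^ 2 - b * e ^ 2 - c * d ^ 2 = 1 →
    ∃ p1 p2 p3 q1 q2 q3 r1 r2 r3 : ℤ, ∀ x y z : ℤ,
      tQ a b c d e f x y z = (p1 * x + p2 * y + p3 * z) ^ 2 + (q1 * x + q2 * y + q3 * z) ^ 2
        + (r1 * x + r2 * y + r3 * z) ^ 2 := by
  intro n
  induction n using Nat.strong_induction_on with
  | _ n ih =>
    intro a b c d e f han hpos hdet
    have ha : 0 < a := by
      have := hpos 1 0 0 (by simp)
      simpa [tQ] using this
    rcases eq_or_lt_of_le (show (1:ℤ) ≤ a by omega) with h1 | h2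
    · -- case a = 1
      have ha1 : a = 1 := h1.symm
      subst ha1
      have hApos : 0 < b - d ^ 2 := by
        have := hpos (-d) 1 0 (by simp)
        simp only [tQ] at this
        nlinarith [this]
      have hdet' : (b - d ^ 2) * (c - e ^ 2) - (f - d * e) ^ 2 = 1 := by
        linear_combination hdet
      obtain ⟨α, β, γ, δ, hb⟩ := binSOS (b - d ^ 2).natAbs (b - d ^ 2) (f - d * e)
        (c - e ^ 2) le_rfl hApos hdet'
      refine ⟨1, d, e, 0, α, β, 0, γ, δ, fun x y z => ?_⟩
      have h' := hb y z
      simp only [tQ]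
      linear_combination h'
    · -- case a ≥ 2
      -- Schur complement binary form (a', b', c') with det a
      set a' : ℤ := a * b - d ^ 2 with ha'
      set b' : ℤ := a * f - d * e with hb'
      set c' : ℤ := a * c - e ^ 2 with hc'
      have hdet' : a' * c' - b' ^ 2 = a := by
        rw [ha', hb', hc']; linear_combination a * hdet
      have hApos : 0 < a' := by
        have h0 := hpos (-d) a 0 (fun h => by omega)
        simp only [tQ] at h0
        have hqv : a * (a * (-d) ^ 2 + b * a ^ 2 + c * 0 ^ 2
            + 2 * (d * (-d) * a + e * (-d) * 0 + f * a * 0)) = a' * a ^ 2 := by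
          rw [ha']; ring
        nlinarith [h0, hqv]
      obtain ⟨p, q, r, s, hps, hA0, hA3⟩ := binred a'.natAbs a' b' c' le_rfl hApos
        (by rw [hdet']; exact ha)
      set A : ℤ := a' * p ^ 2 + 2 * b' * p * r + c' * r ^ 2 with hA
      have hA4 : 3 * A ^ 2 ≤ 4 * a := by rw [hA]; rw [hdet'] at hA3; exact hA3
      -- choose x₀ reducing d*p + e*r mod a
      set j : ℤ := (2 * (d * p + e * r) + a) / (2 * a) with hj
      have h2a : (0:ℤ) < 2 * a := by linarith
      have hmod : 2 * a * j + (2 * (d * p + e * r) + a) % (2 * a)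
          = 2 * (d * p + e * r) + a := by rw [hj]; exact Int.mul_ediv_add_emod _ _
      have hm0 : 0 ≤ (2 * (d * p + e * r) + a) % (2 * a) := Int.emod_nonneg _ (by linarith)
      have hm1 : (2 * (d * p + e * r) + a) % (2 * a) < 2 * a := Int.emod_lt_of_pos _ h2a
      set s₀ : ℤ := d * p + e * r - j * a with hs₀
      have hs1 : -a ≤ 2 * s₀ := by rw [hs₀]; linarith [hmod, hm0]
      have hs2 : 2 * s₀ < a := by rw [hs₀]; linarith [hmod, hm1]
      have hssq : 4 * s₀ ^ 2 ≤ a ^ 2 := by nlinarith [hs1, hs2]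
      -- the new first basis vector v = (-j, p, r)
      have hvne : ¬((-j : ℤ) = 0 ∧ p = 0 ∧ r = 0) := by
        rintro ⟨-, hp, hr⟩; rw [hp, hr] at hps; simp at hps
      have hQv0 : 0 < tQ a b c d e f (-j) p r := hpos _ _ _ hvne
      have hQvid : a * tQ a b c d e f (-j) p r = s₀ ^ 2 + A := by
        simp only [tQ]; rw [hA, ha', hb', hc', hs₀]; ring
      set Qv : ℤ := tQ a b c d e f (-j) p r with hQv
      have hQvlt : Qv < a := by
        by_contra hcon
        push_neg at hcon
        have hq1 : a * a ≤ a * Qv := by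
          apply mul_le_mul_of_nonneg_left hcon (le_of_lt ha)
        have hq2 : a * Qv = s₀ ^ 2 + A := hQvid
        have h1' : 4 * A ≥ 3 * a ^ 2 := by nlinarith [hq1, hq2, hssq]
        have h1'' : 16 * A ^ 2 ≥ 9 * a ^ 4 := by nlinarith [h1', sq_nonneg a]
        have h2' : 27 * a ^ 4 ≤ 64 * a := by nlinarith [h1'', hA4]
        nlinarith [h2', h2]
      -- new form coefficients via basis U = [v, w, u3], w = (0,q,s), u3 = (1,0,0)
      set B1 : ℤ := tQ a b c d e f 0 q s with hB1
      set D1 : ℤ := tB a b c d e f (-j) p r 0 q s with hD1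
      set E1 : ℤ := tB a b c d e f (-j) p r 1 0 0 with hE1
      set F1 : ℤ := tB a b c d e f 0 q s 1 0 0 with hF1
      have hnewdet : Qv * B1 * a + 2 * D1 * E1 * F1 - Qv * F1 ^ 2 - B1 * E1 ^ 2
          - a * D1 ^ 2 = 1 := by
        have key : Qv * B1 * a + 2 * D1 * E1 * F1 - Qv * F1 ^ 2 - B1 * E1 ^ 2 - a * D1 ^ 2
            = (a * b * c + 2 * d * e * f - a * f ^ 2 - b * e ^ 2 - c * d ^ 2)
              * (p * s - q * r) ^ 2 := by
          rw [hQv, hB1, hD1, hE1, hF1]; simp only [tQ, tB]; ring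
        rw [key, hdet, hps]; ring
      have hnewpos : ∀ X Y Z : ℤ, ¬(X = 0 ∧ Y = 0 ∧ Z = 0) →
          0 < tQ Qv B1 a D1 E1 F1 X Y Z := by
        intro X Y Z hXYZ
        have hid : tQ Qv B1 a D1 E1 F1 X Y Z
            = tQ a b c d e f (-j * X + Z) (p * X + q * Y) (r * X + s * Y) := by
          rw [hQv, hB1, hD1, hE1, hF1]; simp only [tQ, tB]; ring
        rw [hid]
        apply hpos
        rintro ⟨h1', h2', h3'⟩
        have hX : X = 0 := by linear_combination s * h2' - q * h3' - X * hps
        have hY : Y = 0 := by linear_combination p * h3' - r * h2' - Y * hps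
        have hZ : Z = 0 := by
          have : (-j) * X + Z = 0 := h1'
          rw [hX] at this; linarith [this]
        exact hXYZ ⟨hX, hY, hZ⟩
      have hQvnat : Qv.natAbs < n := by omega
      obtain ⟨p1, p2, p3, q1, q2, q3, r1, r2, r3, hS⟩ :=
        ih Qv.natAbs hQvnat Qv B1 a D1 E1 F1 le_rfl hnewpos hnewdet
      -- pull back along U⁻¹ : (x,y,z) ↦ (s y - q z, -r y + p z, x + j*(s y - q z))
      refine ⟨p3, p1 * s - p2 * r + p3 * j * s, -p1 * q + p2 * p - p3 * j * q,
              q3, q1 * s - q2 * r + q3 * j * s, -q1 * q + q2 * p - q3 * j * q,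
              r3, r1 * s - r2 * r + r3 * j * s, -r1 * q + r2 * p - r3 * j * q,
              fun x y z => ?_⟩
      have h1' := hS (s * y - q * z) (-r * y + p * z) (x + j * (s * y - q * z))
      have hmid : tQ a b c d e f x y z
          = tQ a b c d e f x ((p * s - q * r) * y) ((p * s - q * r) * z) := by
        rw [hps]; ring_nf
      rw [hmid]
      have hmid2 : tQ a b c d e f x ((p * s - q * r) * y) ((p * s - q * r) * z)
          = tQ Qv B1 a D1 E1 F1 (s * y - q * z) (-r * y + p * z)
              (x + j * (s * y - q * z)) := by
        rw [hQv, hB1, hD1, hE1, hF1]; simp only [tQ, tB]; ring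
      rw [hmid2, h1']
      ring

/-- positive definiteness from positivity of the leading minors -/
lemma posdef_of_minors (a b c d e f : ℤ) (ha : 0 < a) (h2 : 0 < a * b - d ^ 2)
    (h3 : a * b * c + 2 * d * e * f - a * f ^ 2 - b * e ^ 2 - c * d ^ 2 = 1) :
    ∀ x y z : ℤ, ¬(x = 0 ∧ y = 0 ∧ z = 0) → 0 < tQ a b c d e f x y z := by
  intro x y z hxyz
  have key : (a * b - d ^ 2) * (a * tQ a b c d e f x y z)
      = (a * b - d ^ 2) * (a * x + d * y + e * z) ^ 2
        + ((a * b - d ^ 2) * y + (a * f - d * e) * z) ^ 2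
        + a * (a * b * c + 2 * d * e * f - a * f ^ 2 - b * e ^ 2 - c * d ^ 2) * z ^ 2 := by
    simp only [tQ]; ring
  rw [h3] at key
  have hRHS : 0 < (a * b - d ^ 2) * (a * x + d * y + e * z) ^ 2
      + ((a * b - d ^ 2) * y + (a * f - d * e) * z) ^ 2 + a * 1 * z ^ 2 := by
    rcases eq_or_ne z 0 with hz | hz
    · subst hz
      rcases eq_or_ne y 0 with hy | hy
      · subst hy
        have hx : x ≠ 0 := by tauto
        have hne : a * x + d * 0 + e * 0 ≠ 0 := by
          have : a * x ≠ 0 := mul_ne_zero (by omega) hx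
          simpa using this
        have : 0 < (a * x + d * 0 + e * 0) ^ 2 :=
          lt_of_le_of_ne (sq_nonneg _) (Ne.symm (pow_ne_zero 2 hne))
        nlinarith [this, h2]
      · have hne : (a * b - d ^ 2) * y + (a * f - d * e) * 0 ≠ 0 := by
          have : (a * b - d ^ 2) * y ≠ 0 := mul_ne_zero (by omega) hy
          simpa using this
        have : 0 < ((a * b - d ^ 2) * y + (a * f - d * e) * 0) ^ 2 :=
          lt_of_le_of_ne (sq_nonneg _) (Ne.symm (pow_ne_zero 2 hne))
        nlinarith [this, h2, sq_nonneg (a * x + d * y + e * 0)]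
    · have : 0 < a * 1 * z ^ 2 := by positivity
      nlinarith [this, h2, sq_nonneg (a * x + d * y + e * z),
        sq_nonneg ((a * b - d ^ 2) * y + (a * f - d * e) * z)]
  have hprod : 0 < (a * b - d ^ 2) * (a * tQ a b c d e f x y z) := by rw [key]; exact hRHS
  nlinarith [hprod, mul_pos h2 ha]

/-- If `−D` is a square modulo `n*D − 1`, then `n` is a sum of three squares. -/
lemma rep_of_sqmod (n D β r : ℤ) (hD : 0 < D) (hm : 0 < n * D - 1)
    (hr : r * (n * D - 1) = β ^ 2 + D) :
    ∃ x y z : ℤ, x ^ 2 + y ^ 2 + z ^ 2 = n := by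
  have hrpos : 0 < r := by nlinarith [sq_nonneg β]
  have hdet : r * (n * D - 1) * n + 2 * (-β) * 1 * 0 - r * 0 ^ 2 - (n * D - 1) * 1 ^ 2
      - n * (-β) ^ 2 = 1 := by linear_combination n * hr
  have hmin2 : 0 < r * (n * D - 1) - (-β) ^ 2 := by
    have : r * (n * D - 1) - (-β) ^ 2 = D := by linear_combination hr
    rw [this]; exact hD
  obtain ⟨p1, p2, p3, q1, q2, q3, r1, r2, r3, hS⟩ := terSOS r.natAbs r (n * D - 1) n (-β) 1 0
    le_rfl (posdef_of_minors _ _ _ _ _ _ hrpos hmin2 hdet) hdet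
  have h1 := hS 0 0 1
  simp only [tQ] at h1
  refine ⟨p3, q3, r3, ?_⟩
  linear_combination -h1

/-- Legendre's three-square theorem (sufficiency). -/
theorem threeSq : ∀ n : ℕ, (∀ l k : ℕ, n ≠ 4 ^ l * (8 * k + 7)) →
    ∃ x y z : ℤ, x ^ 2 + y ^ 2 + z ^ 2 = (n : ℤ) := by
  intro n
  induction n using Nat.strong_induction_on with
  | _ n ih =>
    intro hform
    rcases Nat.eq_zero_or_pos n with hn0 | hn1
    · exact ⟨0, 0, 0, by simp [hn0]⟩
    by_cases h4 : n % 4 = 0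
    · -- n divisible by 4
      have hdvd : 4 ∣ n := Nat.dvd_of_mod_eq_zero h4
      obtain ⟨x, y, z, hxyz⟩ := ih (n / 4) (by omega) (by
        intro l k hlk
        exact hform (l + 1) k (by
          rw [pow_succ]
          calc n = 4 * (n / 4) := by omega
          _ = 4 * (4 ^ l * (8 * k + 7)) := by rw [hlk]
          _ = 4 ^ l * 4 * (8 * k + 7) := by ring))
      refine ⟨2 * x, 2 * y, 2 * z, ?_⟩
      have h44 : (n : ℤ) = 4 * ((n / 4 : ℕ) : ℤ) := by omega
      linear_combination 4 * hxyz - h44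
    · -- n not divisible by 4
      have h87 : n % 8 ≠ 7 := by
        intro h7
        exact hform 0 (n / 8) (by omega)
      -- main construction
      have hn4 : n % 4 = 1 ∨ n % 4 = 2 ∨ n % 4 = 3 := by omega
      haveI : NeZero (4 * n) := ⟨by omega⟩
      rcases Nat.even_or_odd n with heven | hodd
      · -- n ≡ 2 (mod 4)
        have hn2 : n % 4 = 2 := by
          rcases heven with ⟨j, hj⟩; omega
        -- Dirichlet prime p ≡ n - 1 (mod 4n)
        have hcop : Nat.Coprime (n - 1) (4 * n) := by
          have h1 : Nat.Coprime (n - 1) 4 := by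
            have : Nat.Coprime (n - 1) 2 := by
              rw [Nat.coprime_two_right, Nat.odd_iff]; omega
            simpa using this.pow_right 2
          have h2 : Nat.Coprime (n - 1) n := by
            have h := Nat.gcd_self_add_right (n - 1) 1
            rw [Nat.gcd_one_right] at h
            have e : n - 1 + 1 = n := by omega
            rw [e] at h
            exact h
          exact Nat.Coprime.mul_right h1 h2
        have hunit : IsUnit ((n - 1 : ℕ) : ZMod (4 * n)) :=
          (ZMod.isUnit_iff_coprime _ _).mpr hcop
        obtain ⟨p, hpgt, hpprime, hpmod⟩ :=
          Nat.forall_exists_prime_gt_and_eq_mod hunit (4 * n + 2)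
        haveI : Fact p.Prime := ⟨hpprime⟩
        have hpodd : Odd p := hpprime.odd_of_ne_two (by omega)
        have hmodeq : p ≡ (n - 1) [MOD 4 * n] := (ZMod.natCast_eq_natCast_iff _ _ _).mp hpmod
        have hmod2 : n ≡ p + 1 [MOD 4 * n] := by
          have := (hmodeq.add_right 1).symm
          have hn1 : n - 1 + 1 = n := by omega
          rwa [hn1] at this
        obtain ⟨k, hk⟩ := (Nat.modEq_iff_dvd' (by omega)).mp hmod2
        -- D = 1 + 4k, n * D = p + 1
        have hnD : n * (1 + 4 * k) = p + 1 := by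
          have e : n * (1 + 4 * k) = n + 4 * (n * k) := by ring
          have hk' : p + 1 - n = 4 * (n * k) := by
            rw [hk]; ring
          omega
        set D : ℕ := 1 + 4 * k with hDdef
        have hD4 : D % 4 = 1 := by omega
        have hDodd : Odd D := by rw [Nat.odd_iff]; omega
        have hp4 : p % 4 = 1 := by
          have h1 : (n * D) % 4 = (n % 4) * (D % 4) % 4 := Nat.mul_mod n D 4
          rw [hn2, hD4, hnD] at h1
          omega
        -- Jacobi symbol computation : J(-D | p) = 1
        have hJ : jacobiSym (-(D : ℤ)) p = 1 := by
          have e1 : (-(D : ℤ)) = -1 * (D : ℤ) := by ring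
          rw [e1, jacobiSym.mul_left]
          have h2 : jacobiSym (-1) p = 1 := by
            rw [jacobiSym.at_neg_one hpodd, ZMod.χ₄_nat_one_mod_four hp4]
          have h3 : jacobiSym (D : ℤ) p = 1 := by
            have hrec := jacobiSym.quadratic_reciprocity_one_mod_four hD4 hpodd
            have hdD : (D : ℤ) ∣ (p : ℤ) + 1 := by
              refine ⟨n, ?_⟩
              have := congrArg (fun t : ℕ => (t : ℤ)) hnD
              push_cast at this
              linarith [this]
            have hmodl : jacobiSym (p : ℤ) D = jacobiSym (-1) D := by
              apply jacobiSym.mod_left'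
              have : ((p : ℤ)) % (D : ℤ) = (-1) % (D : ℤ) := by
                have h5 : ((D : ℤ)) ∣ (-1) - (p : ℤ) := by
                  have : (-1 : ℤ) - p = -((p : ℤ) + 1) := by ring
                  rw [this]; exact dvd_neg.mpr hdD
                exact Int.ModEq.symm (Int.modEq_iff_dvd.mpr h5) |>.symm
              exact_mod_cast this
            have hneg1D : jacobiSym (-1) D = 1 := by
              rw [jacobiSym.at_neg_one hDodd, ZMod.χ₄_nat_one_mod_four hD4]
            rw [hrec, hmodl, hneg1D]
          rw [h2, h3]; ring
        -- extract a square root β of -D mod p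
        obtain ⟨β₀, hβ₀⟩ := ZMod.isSquare_of_jacobiSym_eq_one hJ
        set β : ℤ := (β₀.val : ℤ) with hβdef
        have hβcast : (β : ZMod p) = β₀ := by
          rw [hβdef]
          push_cast
          rw [ZMod.natCast_val, ZMod.cast_id]
        have hpdvd : (p : ℤ) ∣ β ^ 2 + D := by
          have : ((β ^ 2 + (D : ℤ) : ℤ) : ZMod p) = 0 := by
            push_cast
            rw [hβcast]
            have : ((-(D : ℤ) : ℤ) : ZMod p) = β₀ * β₀ := hβ₀
            push_cast at this
            rw [sq, ← this]; ring
          exact_mod_cast (ZMod.intCast_zmod_eq_zero_iff_dvd _ p).mp this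
        set r : ℤ := (β ^ 2 + D) / p with hrdef
        have hr : r * ((n : ℤ) * D - 1) = β ^ 2 + D := by
          have h6 : ((n : ℤ)) * D - 1 = p := by
            have := congrArg (fun t : ℕ => (t : ℤ)) hnD
            push_cast at this
            linarith [this]
          rw [h6, hrdef]
          exact Int.ediv_mul_cancel hpdvd
        have hm : 0 < (n : ℤ) * D - 1 := by
          have := congrArg (fun t : ℕ => (t : ℤ)) hnD
          push_cast at this
          have hppos : (0 : ℤ) < p := by exact_mod_cast hpprime.pos
          nlinarith [this, hppos]
        exact rep_of_sqmod n D β r (by positivity) hm hr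
      · -- n odd
        have hodd2 : n % 2 = 1 := Nat.odd_iff.mp hodd
        have hn8 : n % 8 = 1 ∨ n % 8 = 3 ∨ n % 8 = 5 := by omega
        set d₀ : ℕ := if n % 8 = 3 then 1 else 3 with hd₀def
        have hd₀cases : (n % 8 = 3 ∧ d₀ = 1) ∨ (n % 8 ≠ 3 ∧ d₀ = 3) := by
          by_cases h : n % 8 = 3 <;> simp [hd₀def, h]
        have hnd8 : (n * d₀) % 8 = 3 ∨ (n * d₀) % 8 = 7 := by
          rcases hd₀cases with ⟨h3, hd1⟩ | ⟨h3, hd3⟩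
          · left; rw [hd1, Nat.mul_mod, h3]
          · rcases hn8 with h | h | h
            · left; rw [hd3, Nat.mul_mod, h]
            · omega
            · right; rw [hd3, Nat.mul_mod, h]
        have hnd4 : (n * d₀) % 4 = 3 := by omega
        set c : ℕ := (n * d₀ - 1) / 2 with hcdef
        have hc : 2 * c + 1 = n * d₀ := by omega
        have hcodd : c % 2 = 1 := by omega
        have hccop : Nat.Coprime c (4 * n) := by
          have h1 : Nat.Coprime c 4 := by
            have : Nat.Coprime c 2 := by
              rw [Nat.coprime_two_right, Nat.odd_iff]; omega
            simpa using this.pow_right 2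
          have h2 : Nat.Coprime c n := by
            have hg1 : Nat.gcd c n ∣ 2 * c + 1 := by
              rw [hc]; exact Dvd.dvd.mul_right (Nat.gcd_dvd_right c n) d₀
            have hg2 : Nat.gcd c n ∣ 2 * c := Dvd.dvd.mul_left (Nat.gcd_dvd_left c n) 2
            have : Nat.gcd c n ∣ 1 := by
              have := Nat.dvd_sub hg1 hg2
              simpa using this
            exact Nat.dvd_one.mp this
          exact Nat.Coprime.mul_right h1 h2
        have hunit : IsUnit ((c : ℕ) : ZMod (4 * n)) := (ZMod.isUnit_iff_coprime _ _).mpr hccop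
        obtain ⟨p, hpgt, hpprime, hpmod⟩ :=
          Nat.forall_exists_prime_gt_and_eq_mod hunit (8 * n + 8)
        haveI : Fact p.Prime := ⟨hpprime⟩
        have hpodd : Odd p := hpprime.odd_of_ne_two (by omega)
        have hpodd2 : p % 2 = 1 := Nat.odd_iff.mp hpodd
        have hmodeq : p ≡ c [MOD 4 * n] := (ZMod.natCast_eq_natCast_iff _ _ _).mp hpmod
        have hmod2 : 2 * p + 1 ≡ 2 * c + 1 [MOD 8 * n] := by
          have h1 : 2 * p ≡ 2 * c [MOD 2 * (4 * n)] := hmodeq.mul_left' (c := 2)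
          have h2 : 2 * (4 * n) = 8 * n := by ring
          rw [h2] at h1
          exact h1.add_right 1
        have hmod3 : n * d₀ ≡ 2 * p + 1 [MOD 8 * n] := by
          rw [← hc]; exact hmod2.symm
        have hd₀le : 1 ≤ d₀ ∧ d₀ ≤ 3 ∧ d₀ % 2 = 1 := by
          rcases hd₀cases with ⟨_, h⟩ | ⟨_, h⟩ <;> omega
        have hndle : n * d₀ ≤ n * 3 := Nat.mul_le_mul_left n hd₀le.2.1
        obtain ⟨k, hk⟩ := (Nat.modEq_iff_dvd' (by omega)).mp hmod3
        have hnD : n * (d₀ + 8 * k) = 2 * p + 1 := by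
          have e : n * (d₀ + 8 * k) = n * d₀ + 8 * (n * k) := by ring
          have hk' : 2 * p + 1 - n * d₀ = 8 * (n * k) := by rw [hk]; ring
          omega
        set D : ℕ := d₀ + 8 * k with hDdef
        have hD8 : D % 8 = d₀ := by omega
        have hDodd : Odd D := by rw [Nat.odd_iff]; omega
        have hD0 : 0 < D := by omega
        -- J(p | D) = 1
        have hJpD : jacobiSym (p : ℤ) D = 1 := by
          have hdvdD : (D : ℤ) ∣ 2 * (p : ℤ) + 1 := by
            refine ⟨n, ?_⟩
            have := congrArg (fun t : ℕ => (t : ℤ)) hnD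
            push_cast at this
            linarith [this]
          have hmodl : jacobiSym (2 * (p : ℤ)) D = jacobiSym (-1) D := by
            apply jacobiSym.mod_left'
            have h5 : ((D : ℤ)) ∣ (-1) - 2 * (p : ℤ) := by
              have e : (-1 : ℤ) - 2 * p = -(2 * (p : ℤ) + 1) := by ring
              rw [e]; exact dvd_neg.mpr hdvdD
            exact (Int.modEq_iff_dvd.mpr h5 : Int.ModEq _ _ _)
          have hmul : jacobiSym (2 * (p : ℤ)) D = jacobiSym 2 D * jacobiSym (p : ℤ) D :=
            jacobiSym.mul_left 2 p D
          have h2D : jacobiSym 2 D = ZMod.χ₈ (D : ZMod 8) := jacobiSym.at_two hDodd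
          have hm1D : jacobiSym (-1) D = ZMod.χ₄ (D : ZMod 4) := jacobiSym.at_neg_one hDodd
          rcases hd₀cases with ⟨h3, hd1⟩ | ⟨h3, hd3⟩
          · -- D ≡ 1 mod 8
            have hcast8 : ((D : ℕ) : ZMod 8) = ((1 : ℕ) : ZMod 8) := by
              rw [ZMod.natCast_eq_natCast_iff]
              show D % 8 = 1 % 8
              omega
            have hcast4 : ((D : ℕ) : ZMod 4) = ((1 : ℕ) : ZMod 4) := by
              rw [ZMod.natCast_eq_natCast_iff]
              show D % 4 = 1 % 4
              omega
            rw [hcast8] at h2D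
            rw [hcast4] at hm1D
            have hv8 : ZMod.χ₈ ((1 : ℕ) : ZMod 8) = 1 := by decide
            have hv4 : ZMod.χ₄ ((1 : ℕ) : ZMod 4) = 1 := by decide
            rw [hv8] at h2D
            rw [hv4] at hm1D
            rw [hmul, h2D, hm1D] at hmodl
            linarith [hmodl]
          · -- D ≡ 3 mod 8
            have hcast8 : ((D : ℕ) : ZMod 8) = ((3 : ℕ) : ZMod 8) := by
              rw [ZMod.natCast_eq_natCast_iff]
              show D % 8 = 3 % 8
              omega
            have hcast4 : ((D : ℕ) : ZMod 4) = ((3 : ℕ) : ZMod 4) := by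
              rw [ZMod.natCast_eq_natCast_iff]
              show D % 4 = 3 % 4
              omega
            rw [hcast8] at h2D
            rw [hcast4] at hm1D
            have hv8 : ZMod.χ₈ ((3 : ℕ) : ZMod 8) = -1 := by decide
            have hv4 : ZMod.χ₄ ((3 : ℕ) : ZMod 4) = -1 := by decide
            rw [hv8] at h2D
            rw [hv4] at hm1D
            rw [hmul, h2D, hm1D] at hmodl
            linarith [hmodl]
        -- J(-D | p) = 1, case analysis on n % 8
        have hJ : jacobiSym (-(D : ℤ)) p = 1 := by
          have e1 : (-(D : ℤ)) = -1 * (D : ℤ) := by ring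
          rw [e1, jacobiSym.mul_left]
          have hndm := Nat.mul_mod n D 8
          rcases hd₀cases with ⟨h3, hd1⟩ | ⟨h3, hd3⟩
          · -- n ≡ 3 mod 8, D ≡ 1 mod 8, p ≡ 1 mod 4
            have hD81 : D % 8 = 1 := by omega
            have hp4 : p % 4 = 1 := by
              rw [h3, hD81, hnD] at hndm; omega
            have hD41 : D % 4 = 1 := by omega
            have h2 : jacobiSym (-1) p = 1 := by
              rw [jacobiSym.at_neg_one hpodd, ZMod.χ₄_nat_one_mod_four hp4]
            have h3' : jacobiSym (D : ℤ) p = 1 := by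
              rw [jacobiSym.quadratic_reciprocity_one_mod_four hD41 hpodd]
              exact hJpD
            rw [h2, h3']; ring
          · have hD83 : D % 8 = 3 := by omega
            have hD43 : D % 4 = 3 := by omega
            rcases hn8 with h1' | h1' | h1'
            · -- n ≡ 1 mod 8 : p ≡ 1 mod 4
              have hp4 : p % 4 = 1 := by
                rw [h1', hD83, hnD] at hndm; omega
              have h2 : jacobiSym (-1) p = 1 := by
                rw [jacobiSym.at_neg_one hpodd, ZMod.χ₄_nat_one_mod_four hp4]
              have h3' : jacobiSym (D : ℤ) p = 1 := by
                rw [jacobiSym.quadratic_reciprocity_one_mod_four' hDodd hp4]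
                exact hJpD
              rw [h2, h3']; ring
            · omega
            · -- n ≡ 5 mod 8 : p ≡ 3 mod 4
              have hp4 : p % 4 = 3 := by
                rw [h1', hD83, hnD] at hndm; omega
              have h2 : jacobiSym (-1) p = -1 := by
                rw [jacobiSym.at_neg_one hpodd, ZMod.χ₄_nat_three_mod_four hp4]
              have h3' : jacobiSym (D : ℤ) p = -1 := by
                rw [jacobiSym.quadratic_reciprocity_three_mod_four hD43 hp4, hJpD]
              rw [h2, h3']; ring
        -- extract square root of -D mod p, choose odd representative
        obtain ⟨β₀, hβ₀⟩ := ZMod.isSquare_of_jacobiSym_eq_one hJ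
        set β₁ : ℕ := β₀.val with hβ₁def
        set β : ℤ := if β₁ % 2 = 1 then (β₁ : ℤ) else (β₁ : ℤ) + p with hβdef
        have base : ((β₁ : ℕ) : ZMod p) = β₀ := by
          rw [hβ₁def, ZMod.natCast_val, ZMod.cast_id]
        have hβcast : (β : ZMod p) = β₀ := by
          rw [hβdef]
          split_ifs
          · rw [Int.cast_natCast]; exact base
          · push_cast
            rw [ZMod.natCast_self, base]
            ring
        have hβodd : β % 2 = 1 := by
          rw [hβdef]
          split_ifs with hpar
          · omega
          · omega
        have hpdvd : (p : ℤ) ∣ β ^ 2 + D := by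
          have hzero : ((β ^ 2 + (D : ℤ) : ℤ) : ZMod p) = 0 := by
            push_cast
            rw [hβcast]
            have hcopy : ((-(D : ℤ) : ℤ) : ZMod p) = β₀ * β₀ := hβ₀
            push_cast at hcopy
            rw [sq, ← hcopy]; ring
          exact_mod_cast (ZMod.intCast_zmod_eq_zero_iff_dvd _ p).mp hzero
        have h2dvd : (2 : ℤ) ∣ β ^ 2 + D := by
          have hb2 : β ^ 2 % 2 = 1 := by
            obtain ⟨t, ht⟩ : ∃ t : ℤ, β = 2 * t + 1 := ⟨β / 2, by omega⟩
            have : β ^ 2 = 2 * (2 * t ^ 2 + 2 * t) + 1 := by rw [ht]; ring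
            omega
          have hDint : (D : ℤ) % 2 = 1 := by omega
          omega
        have h2pdvd : (2 * (p : ℤ)) ∣ β ^ 2 + D := by
          obtain ⟨t, ht⟩ := hpodd
          have hco : IsCoprime (2 : ℤ) (p : ℤ) := by
            refine ⟨-(t : ℤ), 1, ?_⟩
            have : (p : ℤ) = 2 * t + 1 := by exact_mod_cast ht
            rw [this]; ring
          exact hco.mul_dvd h2dvd hpdvd
        set r : ℤ := (β ^ 2 + D) / (2 * p) with hrdef
        have hnDi : (n : ℤ) * D - 1 = 2 * p := by
          have := congrArg (fun t : ℕ => (t : ℤ)) hnD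
          push_cast at this
          linarith [this]
        have hr : r * ((n : ℤ) * D - 1) = β ^ 2 + D := by
          rw [hnDi, hrdef]
          exact Int.ediv_mul_cancel h2pdvd
        have hm : 0 < (n : ℤ) * D - 1 := by
          rw [hnDi]
          have : (0 : ℤ) < p := by exact_mod_cast hpprime.pos
          linarith
        exact rep_of_sqmod n D β r (by positivity) hm hr

set_option maxRecDepth 40000 in
set_option synthInstance.maxHeartbeats 1000000 in
set_option synthInstance.maxSize 4000 in
set_option maxHeartbeats 4000000 in
lemma design7 : ∀ t r s u : ZMod 7, r ^ 2 + s ^ 2 + u ^ 2 = 3 * t ^ 2 →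
      ((u) = 4 * (r) + 2 * (s) ∧ 6 * (r) + 2 * (s) = -t)
      ∨ ((-u) = 4 * (r) + 2 * (s) ∧ 6 * (r) + 2 * (s) = -t)
      ∨ ((u) = 4 * (r) + 2 * (-s) ∧ 6 * (r) + 2 * (-s) = -t)
      ∨ ((-u) = 4 * (r) + 2 * (-s) ∧ 6 * (r) + 2 * (-s) = -t)
      ∨ ((u) = 4 * (-r) + 2 * (s) ∧ 6 * (-r) + 2 * (s) = -t)
      ∨ ((-u) = 4 * (-r) + 2 * (s) ∧ 6 * (-r) + 2 * (s) = -t)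
      ∨ ((u) = 4 * (-r) + 2 * (-s) ∧ 6 * (-r) + 2 * (-s) = -t)
      ∨ ((-u) = 4 * (-r) + 2 * (-s) ∧ 6 * (-r) + 2 * (-s) = -t)
      ∨ ((s) = 4 * (r) + 2 * (u) ∧ 6 * (r) + 2 * (u) = -t)
      ∨ ((-s) = 4 * (r) + 2 * (u) ∧ 6 * (r) + 2 * (u) = -t)
      ∨ ((s) = 4 * (r) + 2 * (-u) ∧ 6 * (r) + 2 * (-u) = -t)
      ∨ ((-s) = 4 * (r) + 2 * (-u) ∧ 6 * (r) + 2 * (-u) = -t)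
      ∨ ((s) = 4 * (-r) + 2 * (u) ∧ 6 * (-r) + 2 * (u) = -t)
      ∨ ((-s) = 4 * (-r) + 2 * (u) ∧ 6 * (-r) + 2 * (u) = -t)
      ∨ ((s) = 4 * (-r) + 2 * (-u) ∧ 6 * (-r) + 2 * (-u) = -t)
      ∨ ((-s) = 4 * (-r) + 2 * (-u) ∧ 6 * (-r) + 2 * (-u) = -t)
      ∨ ((u) = 4 * (s) + 2 * (r) ∧ 6 * (s) + 2 * (r) = -t)
      ∨ ((-u) = 4 * (s) + 2 * (r) ∧ 6 * (s) + 2 * (r) = -t)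
      ∨ ((u) = 4 * (s) + 2 * (-r) ∧ 6 * (s) + 2 * (-r) = -t)
      ∨ ((-u) = 4 * (s) + 2 * (-r) ∧ 6 * (s) + 2 * (-r) = -t)
      ∨ ((u) = 4 * (-s) + 2 * (r) ∧ 6 * (-s) + 2 * (r) = -t)
      ∨ ((-u) = 4 * (-s) + 2 * (r) ∧ 6 * (-s) + 2 * (r) = -t)
      ∨ ((u) = 4 * (-s) + 2 * (-r) ∧ 6 * (-s) + 2 * (-r) = -t)
      ∨ ((-u) = 4 * (-s) + 2 * (-r) ∧ 6 * (-s) + 2 * (-r) = -t)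
      ∨ ((r) = 4 * (s) + 2 * (u) ∧ 6 * (s) + 2 * (u) = -t)
      ∨ ((-r) = 4 * (s) + 2 * (u) ∧ 6 * (s) + 2 * (u) = -t)
      ∨ ((r) = 4 * (s) + 2 * (-u) ∧ 6 * (s) + 2 * (-u) = -t)
      ∨ ((-r) = 4 * (s) + 2 * (-u) ∧ 6 * (s) + 2 * (-u) = -t)
      ∨ ((r) = 4 * (-s) + 2 * (u) ∧ 6 * (-s) + 2 * (u) = -t)
      ∨ ((-r) = 4 * (-s) + 2 * (u) ∧ 6 * (-s) + 2 * (u) = -t)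
      ∨ ((r) = 4 * (-s) + 2 * (-u) ∧ 6 * (-s) + 2 * (-u) = -t)
      ∨ ((-r) = 4 * (-s) + 2 * (-u) ∧ 6 * (-s) + 2 * (-u) = -t)
      ∨ ((s) = 4 * (u) + 2 * (r) ∧ 6 * (u) + 2 * (r) = -t)
      ∨ ((-s) = 4 * (u) + 2 * (r) ∧ 6 * (u) + 2 * (r) = -t)
      ∨ ((s) = 4 * (u) + 2 * (-r) ∧ 6 * (u) + 2 * (-r) = -t)
      ∨ ((-s) = 4 * (u) + 2 * (-r) ∧ 6 * (u) + 2 * (-r) = -t)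
      ∨ ((s) = 4 * (-u) + 2 * (r) ∧ 6 * (-u) + 2 * (r) = -t)
      ∨ ((-s) = 4 * (-u) + 2 * (r) ∧ 6 * (-u) + 2 * (r) = -t)
      ∨ ((s) = 4 * (-u) + 2 * (-r) ∧ 6 * (-u) + 2 * (-r) = -t)
      ∨ ((-s) = 4 * (-u) + 2 * (-r) ∧ 6 * (-u) + 2 * (-r) = -t)
      ∨ ((r) = 4 * (u) + 2 * (s) ∧ 6 * (u) + 2 * (s) = -t)
      ∨ ((-r) = 4 * (u) + 2 * (s) ∧ 6 * (u) + 2 * (s) = -t)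
      ∨ ((r) = 4 * (u) + 2 * (-s) ∧ 6 * (u) + 2 * (-s) = -t)
      ∨ ((-r) = 4 * (u) + 2 * (-s) ∧ 6 * (u) + 2 * (-s) = -t)
      ∨ ((r) = 4 * (-u) + 2 * (s) ∧ 6 * (-u) + 2 * (s) = -t)
      ∨ ((-r) = 4 * (-u) + 2 * (s) ∧ 6 * (-u) + 2 * (s) = -t)
      ∨ ((r) = 4 * (-u) + 2 * (-s) ∧ 6 * (-u) + 2 * (-s) = -t)
      ∨ ((-r) = 4 * (-u) + 2 * (-s) ∧ 6 * (-u) + 2 * (-s) = -t) := by decide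

lemma adjust7 (N t r s u : ℤ) (hsum : r ^ 2 + s ^ 2 + u ^ 2 = 2 * N)
    (hmod : ((2 * N : ℤ) : ZMod 7) = 3 * ((t : ℤ) : ZMod 7) ^ 2) :
    ∃ r' s' u' : ℤ, r' ^ 2 + s' ^ 2 + u' ^ 2 = 2 * N ∧ (7 ∣ u' - 4 * r' - 2 * s')
      ∧ (7 ∣ 6 * r' + 2 * s' + t) := by
  have finish : ∀ r' s' u' : ℤ, r' ^ 2 + s' ^ 2 + u' ^ 2 = 2 * N →
      ((u' : ZMod 7) = 4 * (r' : ZMod 7) + 2 * (s' : ZMod 7)) →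
      (6 * (r' : ZMod 7) + 2 * (s' : ZMod 7) = -((t : ℤ) : ZMod 7)) →
      ∃ r' s' u' : ℤ, r' ^ 2 + s' ^ 2 + u' ^ 2 = 2 * N ∧ (7 ∣ u' - 4 * r' - 2 * s')
        ∧ (7 ∣ 6 * r' + 2 * s' + t) := by
    intro r' s' u' h1 h2 h3
    refine ⟨r', s', u', h1, ?_, ?_⟩
    · have : ((u' - 4 * r' - 2 * s' : ℤ) : ZMod 7) = 0 := by push_cast; linear_combination h2
      exact_mod_cast (ZMod.intCast_zmod_eq_zero_iff_dvd _ 7).mp this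
    · have : ((6 * r' + 2 * s' + t : ℤ) : ZMod 7) = 0 := by push_cast; linear_combination h3
      exact_mod_cast (ZMod.intCast_zmod_eq_zero_iff_dvd _ 7).mp this
  have hZ : ((r : ℤ) : ZMod 7) ^ 2 + ((s : ℤ) : ZMod 7) ^ 2 + ((u : ℤ) : ZMod 7) ^ 2
      = 3 * ((t : ℤ) : ZMod 7) ^ 2 := by
    rw [← hmod, ← hsum]; push_cast; ring
  have hD := design7 ((t : ℤ) : ZMod 7) ((r : ℤ) : ZMod 7) ((s : ℤ) : ZMod 7)
    ((u : ℤ) : ZMod 7) hZ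
  rcases hD with h|h|h|h|h|h|h|h|h|h|h|h|h|h|h|h|h|h|h|h|h|h|h|h|h|h|h|h|h|h|h|h|h|h|h|h|h|h|h|h|h|h|h|h|h|h|h|h
  · exact finish (r) (s) (u) (by linear_combination hsum) (by push_cast; linear_combination h.1) (by push_cast; linear_combination h.2)
  · exact finish (r) (s) (-u) (by linear_combination hsum) (by push_cast; linear_combination h.1) (by push_cast; linear_combination h.2)
  · exact finish (r) (-s) (u) (by linear_combination hsum) (by push_cast; linear_combination h.1) (by push_cast; linear_combination h.2)
  · exact finish (r) (-s) (-u) (by linear_combination hsum) (by push_cast; linear_combination h.1) (by push_cast; linear_combination h.2)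
  · exact finish (-r) (s) (u) (by linear_combination hsum) (by push_cast; linear_combination h.1) (by push_cast; linear_combination h.2)
  · exact finish (-r) (s) (-u) (by linear_combination hsum) (by push_cast; linear_combination h.1) (by push_cast; linear_combination h.2)
  · exact finish (-r) (-s) (u) (by linear_combination hsum) (by push_cast; linear_combination h.1) (by push_cast; linear_combination h.2)
  · exact finish (-r) (-s) (-u) (by linear_combination hsum) (by push_cast; linear_combination h.1) (by push_cast; linear_combination h.2)
  · exact finish (r) (u) (s) (by linear_combination hsum) (by push_cast; linear_combination h.1) (by push_cast; linear_combination h.2)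
  · exact finish (r) (u) (-s) (by linear_combination hsum) (by push_cast; linear_combination h.1) (by push_cast; linear_combination h.2)
  · exact finish (r) (-u) (s) (by linear_combination hsum) (by push_cast; linear_combination h.1) (by push_cast; linear_combination h.2)
  · exact finish (r) (-u) (-s) (by linear_combination hsum) (by push_cast; linear_combination h.1) (by push_cast; linear_combination h.2)
  · exact finish (-r) (u) (s) (by linear_combination hsum) (by push_cast; linear_combination h.1) (by push_cast; linear_combination h.2)
  · exact finish (-r) (u) (-s) (by linear_combination hsum) (by push_cast; linear_combination h.1) (by push_cast; linear_combination h.2)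
  · exact finish (-r) (-u) (s) (by linear_combination hsum) (by push_cast; linear_combination h.1) (by push_cast; linear_combination h.2)
  · exact finish (-r) (-u) (-s) (by linear_combination hsum) (by push_cast; linear_combination h.1) (by push_cast; linear_combination h.2)
  · exact finish (s) (r) (u) (by linear_combination hsum) (by push_cast; linear_combination h.1) (by push_cast; linear_combination h.2)
  · exact finish (s) (r) (-u) (by linear_combination hsum) (by push_cast; linear_combination h.1) (by push_cast; linear_combination h.2)
  · exact finish (s) (-r) (u) (by linear_combination hsum) (by push_cast; linear_combination h.1) (by push_cast; linear_combination h.2)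
  · exact finish (s) (-r) (-u) (by linear_combination hsum) (by push_cast; linear_combination h.1) (by push_cast; linear_combination h.2)
  · exact finish (-s) (r) (u) (by linear_combination hsum) (by push_cast; linear_combination h.1) (by push_cast; linear_combination h.2)
  · exact finish (-s) (r) (-u) (by linear_combination hsum) (by push_cast; linear_combination h.1) (by push_cast; linear_combination h.2)
  · exact finish (-s) (-r) (u) (by linear_combination hsum) (by push_cast; linear_combination h.1) (by push_cast; linear_combination h.2)
  · exact finish (-s) (-r) (-u) (by linear_combination hsum) (by push_cast; linear_combination h.1) (by push_cast; linear_combination h.2)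
  · exact finish (s) (u) (r) (by linear_combination hsum) (by push_cast; linear_combination h.1) (by push_cast; linear_combination h.2)
  · exact finish (s) (u) (-r) (by linear_combination hsum) (by push_cast; linear_combination h.1) (by push_cast; linear_combination h.2)
  · exact finish (s) (-u) (r) (by linear_combination hsum) (by push_cast; linear_combination h.1) (by push_cast; linear_combination h.2)
  · exact finish (s) (-u) (-r) (by linear_combination hsum) (by push_cast; linear_combination h.1) (by push_cast; linear_combination h.2)
  · exact finish (-s) (u) (r) (by linear_combination hsum) (by push_cast; linear_combination h.1) (by push_cast; linear_combination h.2)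
  · exact finish (-s) (u) (-r) (by linear_combination hsum) (by push_cast; linear_combination h.1) (by push_cast; linear_combination h.2)
  · exact finish (-s) (-u) (r) (by linear_combination hsum) (by push_cast; linear_combination h.1) (by push_cast; linear_combination h.2)
  · exact finish (-s) (-u) (-r) (by linear_combination hsum) (by push_cast; linear_combination h.1) (by push_cast; linear_combination h.2)
  · exact finish (u) (r) (s) (by linear_combination hsum) (by push_cast; linear_combination h.1) (by push_cast; linear_combination h.2)
  · exact finish (u) (r) (-s) (by linear_combination hsum) (by push_cast; linear_combination h.1) (by push_cast; linear_combination h.2)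
  · exact finish (u) (-r) (s) (by linear_combination hsum) (by push_cast; linear_combination h.1) (by push_cast; linear_combination h.2)
  · exact finish (u) (-r) (-s) (by linear_combination hsum) (by push_cast; linear_combination h.1) (by push_cast; linear_combination h.2)
  · exact finish (-u) (r) (s) (by linear_combination hsum) (by push_cast; linear_combination h.1) (by push_cast; linear_combination h.2)
  · exact finish (-u) (r) (-s) (by linear_combination hsum) (by push_cast; linear_combination h.1) (by push_cast; linear_combination h.2)
  · exact finish (-u) (-r) (s) (by linear_combination hsum) (by push_cast; linear_combination h.1) (by push_cast; linear_combination h.2)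
  · exact finish (-u) (-r) (-s) (by linear_combination hsum) (by push_cast; linear_combination h.1) (by push_cast; linear_combination h.2)
  · exact finish (u) (s) (r) (by linear_combination hsum) (by push_cast; linear_combination h.1) (by push_cast; linear_combination h.2)
  · exact finish (u) (s) (-r) (by linear_combination hsum) (by push_cast; linear_combination h.1) (by push_cast; linear_combination h.2)
  · exact finish (u) (-s) (r) (by linear_combination hsum) (by push_cast; linear_combination h.1) (by push_cast; linear_combination h.2)
  · exact finish (u) (-s) (-r) (by linear_combination hsum) (by push_cast; linear_combination h.1) (by push_cast; linear_combination h.2)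
  · exact finish (-u) (s) (r) (by linear_combination hsum) (by push_cast; linear_combination h.1) (by push_cast; linear_combination h.2)
  · exact finish (-u) (s) (-r) (by linear_combination hsum) (by push_cast; linear_combination h.1) (by push_cast; linear_combination h.2)
  · exact finish (-u) (-s) (r) (by linear_combination hsum) (by push_cast; linear_combination h.1) (by push_cast; linear_combination h.2)
  · exact finish (-u) (-s) (-r) (by linear_combination hsum) (by push_cast; linear_combination h.1) (by push_cast; linear_combination h.2)

lemma mod8a : ∀ a b c d : ZMod 8, (2 * a) ^ 2 + 2 * b ^ 2 + 2 * c ^ 2 + 2 * d ^ 2 ≠ 7 := by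
  decide

lemma mod8b : ∀ a b c d : ZMod 8, a ^ 2 + 2 * (2 * b) ^ 2 + 2 * c ^ 2 + 2 * d ^ 2 ≠ 7 := by
  decide

lemma odd_of_mod8 (y₁ y₂ y₃ y₄ nn : ℤ) (h : y₁ ^ 2 + 2 * y₂ ^ 2 + 2 * y₃ ^ 2 + 2 * y₄ ^ 2 = nn)
    (h8 : nn % 8 = 7) : y₁ % 2 = 1 ∧ y₂ % 2 = 1 ∧ y₃ % 2 = 1 ∧ y₄ % 2 = 1 := by
  have hn : ((nn : ℤ) : ZMod 8) = 7 := by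
    have : ((nn - 7 : ℤ) : ZMod 8) = 0 :=
      (ZMod.intCast_zmod_eq_zero_iff_dvd _ 8).mpr (by omega)
    push_cast at this
    linear_combination this
  have hc : ((y₁ : ZMod 8)) ^ 2 + 2 * (y₂ : ZMod 8) ^ 2 + 2 * (y₃ : ZMod 8) ^ 2
      + 2 * (y₄ : ZMod 8) ^ 2 = 7 := by
    rw [← hn, ← h]; push_cast; ring
  refine ⟨?_, ?_, ?_, ?_⟩
  · by_contra hodd
    obtain ⟨w, hw⟩ : ∃ w : ℤ, y₁ = 2 * w := ⟨y₁ / 2, by omega⟩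
    exact mod8a (w : ZMod 8) (y₂ : ZMod 8) (y₃ : ZMod 8) (y₄ : ZMod 8)
      (by rw [← hc, hw]; push_cast; ring)
  · by_contra hodd
    obtain ⟨w, hw⟩ : ∃ w : ℤ, y₂ = 2 * w := ⟨y₂ / 2, by omega⟩
    exact mod8b (y₁ : ZMod 8) (w : ZMod 8) (y₃ : ZMod 8) (y₄ : ZMod 8)
      (by rw [← hc, hw]; push_cast; ring)
  · by_contra hodd
    obtain ⟨w, hw⟩ : ∃ w : ℤ, y₃ = 2 * w := ⟨y₃ / 2, by omega⟩
    exact mod8b (y₁ : ZMod 8) (w : ZMod 8) (y₂ : ZMod 8) (y₄ : ZMod 8)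
      (by rw [← hc, hw]; push_cast; ring)
  · by_contra hodd
    obtain ⟨w, hw⟩ : ∃ w : ℤ, y₄ = 2 * w := ⟨y₄ / 2, by omega⟩
    exact mod8b (y₁ : ZMod 8) (w : ZMod 8) (y₂ : ZMod 8) (y₃ : ZMod 8)
      (by rw [← hc, hw]; push_cast; ring)

lemma two_polygonal (m x : ℤ) : 2 * polygonal m x = (m - 2) * x ^ 2 - (m - 4) * x := by
  obtain ⟨t, ht⟩ := Int.even_mul_succ_self (x - 1)
  have ht' : (x - 1) * (x - 1 + 1) = t + t := ht
  apply Int.mul_ediv_cancel'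
  exact ⟨(m - 2) * t + x, by linear_combination (m - 2) * ht'⟩

theorem rep_1222 (m : ℤ) (hm : 3 ≤ m) (A B : ℤ) (hA : 0 ≤ A)
    (hd : 0 ≤ 14 * A + 7 * B - B ^ 2)
    (hform : ∀ l k : ℕ, 14 * A + 7 * B - B ^ 2 ≠ 2 * (4 : ℤ) ^ l * (8 * (k : ℤ) + 7)) :
    ∃ x₁ x₂ x₃ x₄ : ℤ,
      polygonal m x₁ + 2 * polygonal m x₂ + 2 * polygonal m x₃ + 2 * polygonal m x₄ =
        A * (m - 2) + B := by
  set N : ℤ := 14 * A + 7 * B - B ^ 2 with hN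
  set t : ℤ := 2 * B - 7 with ht
  have h2N0 : (0 : ℤ) ≤ 2 * N := by linarith
  -- three squares representation of 2N
  obtain ⟨r, s, u, hrsu⟩ := threeSq (2 * N).toNat (by
    intro l k hlk
    have hcast : (2 * N : ℤ) = 4 ^ l * (8 * k + 7) := by
      rw [← Int.toNat_of_nonneg h2N0, hlk]
      push_cast
      ring
    cases l with
    | zero =>
      simp at hcast
      omega
    | succ l' =>
      apply hform l' k
      have e : (4 : ℤ) ^ (l' + 1) * (8 * k + 7) = 4 * ((4 : ℤ) ^ l' * (8 * k + 7)) := by ring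
      rw [e] at hcast
      linarith)
  rw [Int.toNat_of_nonneg h2N0] at hrsu
  -- congruence 2N ≡ 3 t² (mod 7)
  have hmod : ((2 * N : ℤ) : ZMod 7) = 3 * ((t : ℤ) : ZMod 7) ^ 2 := by
    have h7 : ((2 * N - 3 * t ^ 2 : ℤ) : ZMod 7) = 0 :=
      (ZMod.intCast_zmod_eq_zero_iff_dvd _ 7).mpr
        ⟨4 * A + 14 * B - 2 * B ^ 2 - 21, by rw [hN, ht]; ring⟩
    push_cast at h7 ⊢
    linear_combination h7
  obtain ⟨r', s', u', hsum, h7a, h7b⟩ := adjust7 N t r s u hrsu hmod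
  obtain ⟨w1, hw1⟩ := h7a
  obtain ⟨w2, hw2⟩ := h7b
  -- construct y values
  obtain ⟨y₂, hy₂⟩ : ∃ y : ℤ, 7 * y = t + (2 * r' + u') :=
    ⟨w1 + w2, by linear_combination -hw1 - hw2⟩
  obtain ⟨y₃, hy₃⟩ : ∃ y : ℤ, 7 * y = t + (-r' + 2 * s') :=
    ⟨w2 - r', by linear_combination -hw2⟩
  obtain ⟨y₄, hy₄⟩ : ∃ y : ℤ, 7 * y = t + (-s' - 2 * u') :=
    ⟨w2 - 2 * w1 - 2 * r' - s', by linear_combination 2 * hw1 - hw2⟩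
  set y₁ : ℤ := t - 2 * (y₂ + y₃ + y₄) with hy₁
  have hF : (2 * r' + u') ^ 2 + (-r' + 2 * s') ^ 2 + (-s' - 2 * u') ^ 2
      + 2 * ((2 * r' + u') + (-r' + 2 * s') + (-s' - 2 * u')) ^ 2 = 14 * N := by
    linear_combination 7 * hsum
  have hNnt : 4 * N = 7 * (8 * A + 7) - t ^ 2 := by rw [hN, ht]; ring
  have h49 : 49 * (y₁ ^ 2 + 2 * y₂ ^ 2 + 2 * y₃ ^ 2 + 2 * y₄ ^ 2) = 49 * (8 * A + 7) := by
    have e1 : 7 * y₁ = t - 2 * ((2 * r' + u') + (-r' + 2 * s') + (-s' - 2 * u')) := by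
      rw [hy₁]; linear_combination -2 * hy₂ - 2 * hy₃ - 2 * hy₄
    linear_combination 2 * hF + 7 * hNnt
      + (7 * y₁ + (t - 2 * ((2 * r' + u') + (-r' + 2 * s') + (-s' - 2 * u')))) * e1
      + 2 * (7 * y₂ + t + (2 * r' + u')) * hy₂
      + 2 * (7 * y₃ + t + (-r' + 2 * s')) * hy₃
      + 2 * (7 * y₄ + t + (-s' - 2 * u')) * hy₄
  have hQy : y₁ ^ 2 + 2 * y₂ ^ 2 + 2 * y₃ ^ 2 + 2 * y₄ ^ 2 = 8 * A + 7 :=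
    mul_left_cancel₀ (by norm_num : (49 : ℤ) ≠ 0) h49
  have hodds := odd_of_mod8 y₁ y₂ y₃ y₄ (8 * A + 7) hQy (by omega)
  obtain ⟨x₁, hx₁⟩ : ∃ x : ℤ, y₁ = 2 * x - 1 := ⟨(y₁ + 1) / 2, by omega⟩
  obtain ⟨x₂, hx₂⟩ : ∃ x : ℤ, y₂ = 2 * x - 1 := ⟨(y₂ + 1) / 2, by omega⟩
  obtain ⟨x₃, hx₃⟩ : ∃ x : ℤ, y₃ = 2 * x - 1 := ⟨(y₃ + 1) / 2, by omega⟩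
  obtain ⟨x₄, hx₄⟩ : ∃ x : ℤ, y₄ = 2 * x - 1 := ⟨(y₄ + 1) / 2, by omega⟩
  have hLy : y₁ + 2 * (y₂ + y₃ + y₄) = t := by rw [hy₁]; ring
  rw [hx₁, hx₂, hx₃, hx₄] at hQy hLy
  have hQx : (x₁ ^ 2 + 2 * x₂ ^ 2 + 2 * x₃ ^ 2 + 2 * x₄ ^ 2)
      - (x₁ + 2 * x₂ + 2 * x₃ + 2 * x₄) = 2 * A := by
    have h4 : 4 * ((x₁ ^ 2 + 2 * x₂ ^ 2 + 2 * x₃ ^ 2 + 2 * x₄ ^ 2)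
        - (x₁ + 2 * x₂ + 2 * x₃ + 2 * x₄)) = 8 * A := by linear_combination hQy
    linarith
  have hLx : x₁ + 2 * x₂ + 2 * x₃ + 2 * x₄ = B := by
    have h2 : 2 * (x₁ + 2 * x₂ + 2 * x₃ + 2 * x₄) = 2 * B := by
      rw [ht] at hLy; linear_combination hLy
    linarith
  refine ⟨x₁, x₂, x₃, x₄, ?_⟩
  have hp1 := two_polygonal m x₁
  have hp2 := two_polygonal m x₂
  have hp3 := two_polygonal m x₃
  have hp4 := two_polygonal m x₄
  have h2g : 2 * (polygonal m x₁ + 2 * polygonal m x₂ + 2 * polygonal m x₃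
      + 2 * polygonal m x₄) = 2 * (A * (m - 2) + B) := by
    linear_combination hp1 + 2 * hp2 + 2 * hp3 + 2 * hp4 + (m - 2) * hQx + 2 * hLx
  exact mul_left_cancel₀ (by norm_num : (2 : ℤ) ≠ 0) h2g
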